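/- Let S be a finite singleton-rich semigroup and s, t ∈ S. Then st = s φ^{(s,t)} t and st = s ψ^{(s,t)} t, where φ^{(s,t)} and ψ^{(s,t)} are the eventual values of the sequences φ(s^φ_i, t^φ_i) and ψ(s^ψ_j, t^ψ_j) respectively. -/
import Mathlib

open scoped Classical

/-- φ*(s): the idempotent right identities of `s`. -/
def rIds {S : Type*} [Mul S] (s : S) : Set S := {e | e * e = e ∧ s * e = s}

/-- φ⁺(s): the idempotent left identities of `s`. -/
def lIds {S : Type*} [Mul S] (s : S) : Set S := {e | e * e = e ∧ e * s = s}

/-- `x` is the (necessarily unique) element of a singleton kernel (minimal ideal) of the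
subsemigroup `T`: `{x}` is an ideal of `T`, hence the minimal ideal of `T`. -/
def IsKer {S : Type*} [Semigroup S] (T : Subsemigroup S) (x : S) : Prop :=
  x ∈ T ∧ ∀ a ∈ T, a * x = x ∧ x * a = x

/-- The natural partial order on idempotents: `e ≤ f` iff `ef = fe = e`. -/
def nle {S : Type*} [Mul S] (e f : S) : Prop := e * f = e ∧ f * e = e

/-- The relation `≪`: `s ≪ t` iff `s = s⁺ t s*`, where `sa s = s*` and `pl s = s⁺`. -/
def ll {S : Type*} [Mul S] (sa pl : S → S) (s t : S) : Prop := s = pl s * t * sa s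

/-- φ(x,y) = (x* y)⁺. -/
def phiF {S : Type*} [Mul S] (sa pl : S → S) (x y : S) : S := pl (sa x * y)

/-- ψ(x,y) = (x y⁺)*. -/
def psiF {S : Type*} [Mul S] (sa pl : S → S) (x y : S) : S := sa (x * pl y)

/-- The φ-sequence: `(s^φ₀, t^φ₀) = (s, t)`,
`s^φ_{i+1} = s^φ_i φ(s^φ_i, t^φ_i)`, `t^φ_{i+1} = (s^φ_i)* t^φ_i`. -/
def phiSeq {S : Type*} [Mul S] (sa pl : S → S) (s t : S) : ℕ → S × S
  | 0 => (s, t)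
  | i + 1 =>
      let p := phiSeq sa pl s t i
      (p.1 * phiF sa pl p.1 p.2, sa p.1 * p.2)

/-- The ψ-sequence: `(s^ψ₀, t^ψ₀) = (s, t)`,
`s^ψ_{i+1} = s^ψ_i (t^ψ_i)⁺`, `t^ψ_{i+1} = ψ(s^ψ_i, t^ψ_i) t^ψ_i`. -/
def psiSeq {S : Type*} [Mul S] (sa pl : S → S) (s t : S) : ℕ → S × S
  | 0 => (s, t)
  | i + 1 =>
      let p := psiSeq sa pl s t i
      (p.1 * pl p.2, psiF sa pl p.1 p.2 * p.2)

/-- `e` is the stable (eventual) value `φ^{(s,t)}` of the sequence `φ(s^φ_i, t^φ_i)`. -/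
def IsPhiLim {S : Type*} [Mul S] (sa pl : S → S) (s t e : S) : Prop :=
  ∃ N : ℕ, ∀ i ≥ N, phiF sa pl (phiSeq sa pl s t i).1 (phiSeq sa pl s t i).2 = e

/-- `e` is the stable (eventual) value `ψ^{(s,t)}` of the sequence `ψ(s^ψ_i, t^ψ_i)`. -/
def IsPsiLim {S : Type*} [Mul S] (sa pl : S → S) (s t e : S) : Prop :=
  ∃ N : ℕ, ∀ i ≥ N, psiF sa pl (psiSeq sa pl s t i).1 (psiSeq sa pl s t i).2 = e

section Aux

variable {S : Type*} [Semigroup S] (sa pl : S → S)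
variable (hsa : ∀ s : S, IsKer (Subsemigroup.closure (rIds s)) (sa s))
variable (hpl : ∀ s : S, IsKer (Subsemigroup.closure (lIds s)) (pl s))

/-- Every element of the closure of `rIds s` is a right identity of `s`. -/
lemma closure_rIds_mul (s : S) : ∀ a ∈ Subsemigroup.closure (rIds s), s * a = s := by
  intro a ha
  induction ha using Subsemigroup.closure_induction with
  | mem x hx => exact hx.2
  | mul x y _ _ hx hy => rw [← mul_assoc, hx, hy]

/-- Every element of the closure of `lIds s` is a left identity of `s`. -/
lemma closure_lIds_mul (s : S) : ∀ a ∈ Subsemigroup.closure (lIds s), a * s = s := by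
  intro a ha
  induction ha using Subsemigroup.closure_induction with
  | mem x hx => exact hx.2
  | mul x y _ _ hx hy => rw [mul_assoc, hy, hx]

include hsa in
lemma sa_right (s : S) : s * sa s = s := closure_rIds_mul s _ (hsa s).1

include hsa in
lemma sa_idem (s : S) : sa s * sa s = sa s := ((hsa s).2 _ (hsa s).1).1

include hsa in
lemma sa_absorb (s e : S) (h1 : e * e = e) (h2 : s * e = s) :
    e * sa s = sa s ∧ sa s * e = sa s :=
  (hsa s).2 e (Subsemigroup.subset_closure ⟨h1, h2⟩)

include hpl in
lemma pl_left (s : S) : pl s * s = s := closure_lIds_mul s _ (hpl s).1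

include hpl in
lemma pl_idem (s : S) : pl s * pl s = pl s := ((hpl s).2 _ (hpl s).1).1

include hpl in
lemma pl_absorb (s e : S) (h1 : e * e = e) (h2 : e * s = s) :
    e * pl s = pl s ∧ pl s * e = pl s :=
  (hpl s).2 e (Subsemigroup.subset_closure ⟨h1, h2⟩)

include hsa hpl in
lemma phi_side (s t phiL : S) (hphi : IsPhiLim sa pl s t phiL) :
    s * t = s * phiL * t := by
  obtain ⟨N, hN⟩ := hphi
  set A : ℕ → S := fun i => (phiSeq sa pl s t i).1 with hA
  set B : ℕ → S := fun i => (phiSeq sa pl s t i).2 with hB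
  set F : ℕ → S := fun i => pl (sa (A i) * B i) with hF
  have hA0 : A 0 = s := rfl
  have hB0 : B 0 = t := rfl
  have hAs : ∀ i, A (i + 1) = A i * F i := fun i => rfl
  have hBs : ∀ i, B (i + 1) = sa (A i) * B i := fun i => rfl
  have hNF : ∀ i ≥ N, F i = phiL := hN
  -- F i is idempotent
  have hFi : ∀ i, F i * F i = F i := fun i => pl_idem pl hpl _
  -- F i is a left identity of sa (A i) * B i
  have hFl : ∀ i, F i * (sa (A i) * B i) = sa (A i) * B i := fun i => pl_left pl hpl _
  -- sa (A i) absorbs F i on both sides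
  have hsaF : ∀ i, F i * sa (A i) = F i ∧ sa (A i) * F i = F i := by
    intro i
    have h := pl_absorb pl hpl (sa (A i) * B i) (sa (A i)) (sa_idem sa hsa _)
      (by rw [← mul_assoc, sa_idem sa hsa])
    exact ⟨h.2, h.1⟩
  -- F i is an idempotent right identity of A (i+1)
  have hFr : ∀ i, A (i + 1) * F i = A (i + 1) := by
    intro i; rw [hAs i, mul_assoc, hFi i]
  -- chain: F (i+1) ≤ F i
  have hchain1 : ∀ i, F i * F (i + 1) = F (i + 1) ∧ F (i + 1) * F i = F (i + 1) := by
    intro i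
    have habs := sa_absorb sa hsa (A (i + 1)) (F i) (hFi i) (hFr i)
    exact pl_absorb pl hpl (sa (A (i + 1)) * B (i + 1)) (F i) (hFi i)
      (by rw [← mul_assoc, habs.1])
  have hchain : ∀ i j, i ≤ j → F i * F j = F j ∧ F j * F i = F j := by
    intro i j hij
    induction j, hij using Nat.le_induction with
    | base => exact ⟨hFi i, hFi i⟩
    | succ j hij ih =>
        constructor
        · calc F i * F (j + 1) = F i * (F j * F (j + 1)) := by rw [(hchain1 j).1]
            _ = F i * F j * F (j + 1) := (mul_assoc _ _ _).symm
            _ = F j * F (j + 1) := by rw [ih.1]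
            _ = F (j + 1) := (hchain1 j).1
        · calc F (j + 1) * F i = F (j + 1) * F j * F i := by rw [(hchain1 j).2]
            _ = F (j + 1) * (F j * F i) := mul_assoc _ _ _
            _ = F (j + 1) * F j := by rw [ih.2]
            _ = F (j + 1) := (hchain1 j).2
  -- phiL ≤ F i for all i
  have hLle : ∀ i, F i * phiL = phiL ∧ phiL * F i = phiL := by
    intro i
    have h := hchain i (max i N) (le_max_left _ _)
    rwa [hNF _ (le_max_right _ _)] at h
  -- phiL * sa (A i) = phiL
  have hLsa : ∀ i, phiL * sa (A i) = phiL := by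
    intro i
    rw [← (hLle i).2, mul_assoc, (hsaF i).1]
  -- the quantity A i * phiL * B i is constant
  have hconst : ∀ i, A i * phiL * B i = s * phiL * t := by
    intro i
    induction i with
    | zero => rfl
    | succ i ih =>
        calc A (i + 1) * phiL * B (i + 1)
            = A i * F i * phiL * (sa (A i) * B i) := by rw [hAs, hBs]
          _ = A i * (F i * phiL * (sa (A i) * B i)) := by simp only [mul_assoc]
          _ = A i * (phiL * (sa (A i) * B i)) := by rw [(hLle i).1]
          _ = A i * (phiL * sa (A i) * B i) := by rw [mul_assoc phiL]
          _ = A i * (phiL * B i) := by rw [hLsa i]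
          _ = A i * phiL * B i := (mul_assoc _ _ _).symm
          _ = s * phiL * t := ih
  -- at stage N+1, phiL is a right identity of A (N+1)
  have hfinal : A (N + 1) * phiL = A (N + 1) := by
    rw [← hNF N le_rfl]; exact hFr N
  -- the product A i * B i is constant, equal to s * t
  have hprod : ∀ i, A i * B i = s * t := by
    intro i
    induction i with
    | zero => rfl
    | succ i ih =>
        calc A (i + 1) * B (i + 1)
            = A i * F i * (sa (A i) * B i) := by rw [hAs, hBs]
          _ = A i * (F i * (sa (A i) * B i)) := mul_assoc _ _ _
          _ = A i * (sa (A i) * B i) := by rw [hFl i]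
          _ = A i * sa (A i) * B i := (mul_assoc _ _ _).symm
          _ = A i * B i := by rw [sa_right sa hsa]
          _ = s * t := ih
  calc s * t = A (N + 1) * B (N + 1) := (hprod (N + 1)).symm
    _ = A (N + 1) * phiL * B (N + 1) := by rw [hfinal]
    _ = s * phiL * t := hconst (N + 1)

include hsa hpl in
lemma psi_side (s t psiL : S) (hpsi : IsPsiLim sa pl s t psiL) :
    s * t = s * psiL * t := by
  obtain ⟨N, hN⟩ := hpsi
  set A : ℕ → S := fun i => (psiSeq sa pl s t i).1 with hA
  set B : ℕ → S := fun i => (psiSeq sa pl s t i).2 with hB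
  set F : ℕ → S := fun i => sa (A i * pl (B i)) with hF
  have hAs : ∀ i, A (i + 1) = A i * pl (B i) := fun i => rfl
  have hBs : ∀ i, B (i + 1) = F i * B i := fun i => rfl
  have hNF : ∀ i ≥ N, F i = psiL := hN
  have hFi : ∀ i, F i * F i = F i := fun i => sa_idem sa hsa _
  -- F i is a right identity of A i * pl (B i)
  have hFr : ∀ i, (A i * pl (B i)) * F i = A i * pl (B i) := fun i => sa_right sa hsa _
  -- pl (B i) absorbs F i on both sides
  have hplF : ∀ i, pl (B i) * F i = F i ∧ F i * pl (B i) = F i := by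
    intro i
    have h := sa_absorb sa hsa (A i * pl (B i)) (pl (B i)) (pl_idem pl hpl _)
      (by rw [mul_assoc, pl_idem pl hpl])
    exact ⟨h.1, h.2⟩
  -- F i is an idempotent left identity of B (i+1)
  have hFl : ∀ i, F i * B (i + 1) = B (i + 1) := by
    intro i; rw [hBs i, ← mul_assoc, hFi i]
  -- chain: F (i+1) ≤ F i
  have hchain1 : ∀ i, F (i + 1) * F i = F (i + 1) ∧ F i * F (i + 1) = F (i + 1) := by
    intro i
    have habs := pl_absorb pl hpl (B (i + 1)) (F i) (hFi i) (hFl i)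
    have h := sa_absorb sa hsa (A (i + 1) * pl (B (i + 1))) (F i) (hFi i)
      (by rw [mul_assoc, habs.2])
    exact ⟨h.2, h.1⟩
  have hchain : ∀ i j, i ≤ j → F j * F i = F j ∧ F i * F j = F j := by
    intro i j hij
    induction j, hij using Nat.le_induction with
    | base => exact ⟨hFi i, hFi i⟩
    | succ j hij ih =>
        constructor
        · calc F (j + 1) * F i = F (j + 1) * F j * F i := by rw [(hchain1 j).1]
            _ = F (j + 1) * (F j * F i) := mul_assoc _ _ _
            _ = F (j + 1) * F j := by rw [ih.1]
            _ = F (j + 1) := (hchain1 j).1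
        · calc F i * F (j + 1) = F i * (F j * F (j + 1)) := by rw [(hchain1 j).2]
            _ = F i * F j * F (j + 1) := (mul_assoc _ _ _).symm
            _ = F j * F (j + 1) := by rw [ih.2]
            _ = F (j + 1) := (hchain1 j).2
  have hLle : ∀ i, psiL * F i = psiL ∧ F i * psiL = psiL := by
    intro i
    have h := hchain i (max i N) (le_max_left _ _)
    rwa [hNF _ (le_max_right _ _)] at h
  -- pl (B i) * psiL = psiL
  have hLpl : ∀ i, pl (B i) * psiL = psiL := by
    intro i
    calc pl (B i) * psiL = pl (B i) * (F i * psiL) := by rw [(hLle i).2]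
      _ = pl (B i) * F i * psiL := (mul_assoc _ _ _).symm
      _ = F i * psiL := by rw [(hplF i).1]
      _ = psiL := (hLle i).2
  have hconst : ∀ i, A i * psiL * B i = s * psiL * t := by
    intro i
    induction i with
    | zero => rfl
    | succ i ih =>
        calc A (i + 1) * psiL * B (i + 1)
            = A i * pl (B i) * psiL * (F i * B i) := by rw [hAs, hBs]
          _ = A i * (pl (B i) * psiL * (F i * B i)) := by simp only [mul_assoc]
          _ = A i * (psiL * (F i * B i)) := by rw [hLpl i]
          _ = A i * (psiL * F i * B i) := by rw [mul_assoc psiL]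
          _ = A i * (psiL * B i) := by rw [(hLle i).1]
          _ = A i * psiL * B i := (mul_assoc _ _ _).symm
          _ = s * psiL * t := ih
  -- at stage N+1, psiL is a left identity of B (N+1)
  have hfinal : psiL * B (N + 1) = B (N + 1) := by
    rw [← hNF N le_rfl]; exact hFl N
  have hprod : ∀ i, A i * B i = s * t := by
    intro i
    induction i with
    | zero => rfl
    | succ i ih =>
        rw [hAs i, hBs i, ← mul_assoc, hFr i, mul_assoc, pl_left pl hpl, ih]
  calc s * t = A (N + 1) * B (N + 1) := (hprod (N + 1)).symm
    _ = A (N + 1) * (psiL * B (N + 1)) := by rw [hfinal]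
    _ = A (N + 1) * psiL * B (N + 1) := (mul_assoc _ _ _).symm
    _ = s * psiL * t := hconst (N + 1)

end Aux

/-- `st = s φ^{(s,t)} t = s ψ^{(s,t)} t`. -/
theorem stmt13 {S : Type*} [Semigroup S] [Fintype S] (sa pl : S → S)
    (hsa : ∀ s : S, IsKer (Subsemigroup.closure (rIds s)) (sa s))
    (hpl : ∀ s : S, IsKer (Subsemigroup.closure (lIds s)) (pl s))
    (s t phiL psiL : S)
    (hphi : IsPhiLim sa pl s t phiL) (hpsi : IsPsiLim sa pl s t psiL) :
    s * t = s * phiL * t ∧ s * t = s * psiL * t :=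
  ⟨phi_side sa pl hsa hpl s t phiL hphi, psi_side sa pl hsa hpl s t psiL hpsi⟩
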